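/- arXiv:2203.08582 — 2 statements merged into one kernel-verified Lean document; each statement's English description precedes it below -/
import Mathlib

section
/- The tensor A of order 4 and dimension 2 with a_{1111} = 1, a_{1222} = -1, a_{2221} = 1 and all other entries zero is a P_0-tensor (indeed A x^4 = x_1^4 ≥ 0 for all x) but is not a column adequate tensor. -/
open Finset Matrix

/-- For a tensor `A` of order `k+1` and dimension `n` (entries `A i f` with row index `i`
and remaining indices `f`), `tmul A x i = (A x^k)_i`. -/
def tmul {n k : ℕ} (A : Fin n → (Fin k → Fin n) → ℝ) (x : Fin n → ℝ) (i : Fin n) : ℝ :=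
  ∑ f : Fin k → Fin n, A i f * ∏ j, x (f j)

/-- A tensor is column adequate if `x_i (A x^{m-1})_i ≤ 0` for all `i` implies `A x^{m-1} = 0`. -/
def ColumnAdequate {n k : ℕ} (A : Fin n → (Fin k → Fin n) → ℝ) : Prop :=
  ∀ x : Fin n → ℝ, (∀ i, x i * tmul A x i ≤ 0) → ∀ i, tmul A x i = 0

/-- The order-4 dimension-2 tensor with `a_{1111} = 1`, `a_{1222} = -1`, `a_{2221} = 1`. -/
noncomputable def exTensor7 : Fin 2 → (Fin 3 → Fin 2) → ℝ := fun i f =>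
  if i = 0 ∧ f = ![0, 0, 0] then 1
  else if i = 0 ∧ f = ![1, 1, 1] then -1
  else if i = 1 ∧ f = ![1, 1, 0] then 1
  else 0

lemma tmul0 (x : Fin 2 → ℝ) : tmul exTensor7 x 0 = x 0 ^ 3 - x 1 ^ 3 := by
  rw [tmul, Finset.sum_eq_add_of_mem ![0,0,0] ![1,1,1] (mem_univ _) (mem_univ _) (by decide)
    (fun c _ hc => by simp [exTensor7, hc.1, hc.2])]
  simp only [exTensor7, Fin.prod_univ_three]
  norm_num
  show x 0 * x 0 * x 0 + -(x 1 * x 1 * x 1) = x 0 ^ 3 - x 1 ^ 3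
  ring

lemma tmul1 (x : Fin 2 → ℝ) : tmul exTensor7 x 1 = x 0 * x 1 ^ 2 := by
  rw [tmul, Fintype.sum_eq_single ![1,1,0]
    (fun c h1 => by simp [exTensor7, h1])]
  simp [exTensor7, Fin.prod_univ_three]
  ring

/-- This tensor satisfies `A x^4 = x_1^4 ≥ 0`, is a `P₀`-tensor,
but is not column adequate. -/
theorem exTensor7_P0_not_column_adequate :
    (∀ x : Fin 2 → ℝ, ∑ i, x i * tmul exTensor7 x i = (x 0) ^ 4) ∧
    (∀ x : Fin 2 → ℝ, x ≠ 0 → ∃ i, x i ≠ 0 ∧ 0 ≤ x i * tmul exTensor7 x i) ∧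
    ¬ ColumnAdequate exTensor7 := by
  refine ⟨fun x => ?_, fun x hx => ?_, ?_⟩
  · rw [Fin.sum_univ_two, tmul0, tmul1]; ring
  · by_cases h1 : x 1 = 0
    · refine ⟨0, fun h0 => hx (funext fun i => by fin_cases i <;> simp [h0, h1]), ?_⟩
      rw [tmul0, h1]; nlinarith [sq_nonneg (x 0 ^ 2)]
    · by_cases h : 0 ≤ x 1 * tmul exTensor7 x 1
      · exact ⟨1, h1, h⟩
      · rw [tmul1] at h
        push_neg at h
        refine ⟨0, fun h0 => by rw [h0] at h; nlinarith, ?_⟩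
        rw [tmul0]
        nlinarith [sq_nonneg (x 0), sq_nonneg (x 0 ^ 2)]
  · intro hca
    have := hca ![0, 1] (fun i => by fin_cases i <;> simp [tmul0, tmul1]) 0
    rw [tmul0] at this
    norm_num at this
end

section
/- Let A be a tensor of even order m and dimension n with auxiliary matrix Ā of block form [[M(A), O],[O, O]]. If A is a column adequate tensor, then Ā is a column adequate matrix. -/
open Finset Matrix

/-- A tensor is row diagonal if `a_{i i2...im}` can be nonzero only when `i2 = ... = im`. -/
def RowDiagonal {n k : ℕ} (A : Fin n → (Fin k → Fin n) → ℝ) : Prop :=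
  ∀ i f, A i f ≠ 0 → ∀ j j' : Fin k, f j = f j'

/-- The majorization matrix of a tensor: `M(A)_{ij} = a_{ijj...j}`. -/
def majorization {n k : ℕ} (A : Fin n → (Fin k → Fin n) → ℝ) : Matrix (Fin n) (Fin n) ℝ :=
  fun i j => A i (fun _ => j)

/-- A square matrix `M` (over any finite index type) is column adequate if
`z_i (Mz)_i ≤ 0` for all `i` implies `Mz = 0`. -/
def MatrixColumnAdequate {ι : Type*} [Fintype ι] (M : Matrix ι ι ℝ) : Prop :=
  ∀ z : ι → ℝ, (∀ i, z i * M.mulVec z i ≤ 0) → M.mulVec z = 0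

lemma odd_root_exists {k : ℕ} (hk : Odd k) (z : ℝ) : ∃ x : ℝ, x ^ k = z := by
  have hk0 : (k : ℝ) ≠ 0 := Nat.cast_ne_zero.mpr (by rintro rfl; simp at hk)
  rcases le_or_gt 0 z with hz | hz
  · refine ⟨z ^ ((k : ℝ)⁻¹), ?_⟩
    rw [← Real.rpow_natCast (z ^ ((k:ℝ)⁻¹)) k, ← Real.rpow_mul hz, inv_mul_cancel₀ hk0,
      Real.rpow_one]
  · refine ⟨-((-z) ^ ((k : ℝ)⁻¹)), ?_⟩
    rw [hk.neg_pow, ← Real.rpow_natCast ((-z) ^ ((k:ℝ)⁻¹)) k, ← Real.rpow_mul (by linarith),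
      inv_mul_cancel₀ hk0, Real.rpow_one, neg_neg]

/-- If `m` is even, `A x^{m-1} = M(A) x^{[m-1]}` for all `x`, and `A` is a column adequate
tensor, then the auxiliary matrix `Ā = [[M(A), O],[O, O]]` is a column adequate matrix. -/
theorem tensor_adequate_implies_auxiliary_adequate {m n p : ℕ} (hm : Even m) (hm2 : 2 ≤ m)
    (A : Fin n → (Fin (m - 1) → Fin n) → ℝ)
    (hblock : ∀ x : Fin n → ℝ, ∀ i,
      tmul A x i = (majorization A).mulVec (fun j => x j ^ (m - 1)) i)
    (hA : ColumnAdequate A) :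
    MatrixColumnAdequate (Matrix.fromBlocks (majorization A) 0 0 (0 : Matrix (Fin p) (Fin p) ℝ)) := by
  intro y hy
  have hodd : Odd (m - 1) := Nat.Even.sub_odd (by omega) hm odd_one
  choose x hx using fun i => odd_root_exists hodd (y (Sum.inl i))
  have hmul : ∀ i : Fin n,
      (Matrix.fromBlocks (majorization A) 0 0 (0 : Matrix (Fin p) (Fin p) ℝ)).mulVec y
        (Sum.inl i) = tmul A x i := by
    intro i
    rw [hblock x i]
    simp only [Matrix.mulVec, Matrix.fromBlocks, dotProduct, Fintype.sum_sum_type,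
      Matrix.of_apply, Sum.elim_inl, Sum.elim_inr, Matrix.zero_apply, Pi.zero_apply,
      zero_mul, Finset.sum_const_zero, add_zero]
    exact Finset.sum_congr rfl fun j _ => by rw [hx j]
  have hmur : ∀ i : Fin p,
      (Matrix.fromBlocks (majorization A) 0 0 (0 : Matrix (Fin p) (Fin p) ℝ)).mulVec y
        (Sum.inr i) = 0 := by
    intro i
    simp [Matrix.mulVec, Matrix.fromBlocks, dotProduct, Fintype.sum_sum_type]
  have hxle : ∀ i, x i * tmul A x i ≤ 0 := by
    intro i
    have h1 : y (Sum.inl i) * tmul A x i ≤ 0 := by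
      have := hy (Sum.inl i); rwa [hmul i] at this
    rw [← hx i] at h1
    have hme : Even (m - 2) := by
      have h := Nat.Odd.sub_odd hodd odd_one
      simpa [show m - 1 - 1 = m - 2 from by omega] using h
    have hsplit : x i ^ (m - 1) = x i * x i ^ (m - 2) := by
      have : m - 1 = (m - 2) + 1 := by omega
      rw [this, pow_succ]; ring
    rw [hsplit] at h1
    by_contra hpos
    push_neg at hpos
    rcases eq_or_ne (x i) 0 with h0 | h0
    · simp [h0] at hpos
    · have hp2 : 0 < x i ^ (m - 2) := hme.pow_pos h0
      nlinarith
  have ht : ∀ i, tmul A x i = 0 := hA x hxle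
  funext i
  cases i with
  | inl i => rw [hmul i, ht i]; rfl
  | inr i => rw [hmur i]; rfl
end
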